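/- Let G be a connected weighted graph with weight w: E(G) → [0,∞), and let Φ be a continuous symmetric triangle function that is monotone increasing in both variables, satisfies Φ(0,0)=0, the identity Φ(x,Φ(y,z)) = Φ(z,Φ(x,y)), the multiset subadditivity condition (Φ*(A) ≤ Φ(Φ*(B), Φ*(C)) whenever multiset A ⊆ B ∪ C), and Φ(a,b) ≥ max{a,b}. Define d_Φ^w(u,v) = inf{w_Φ(P) : P a path joining u and v}, where w_Φ(P) = Φ*(w(e₁),...,w(eₙ)) over edges of P (and 0 for the empty path). Then d_Φ^w satisfies the generalized triangle inequality d_Φ^w(u,v) ≤ Φ(d_Φ^w(u,p), d_Φ^w(p,v)) for all vertices u, v, p, i.e., d_Φ^w is a Φ-pseudosemimetric on V(G). -/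

import Mathlib

open scoped NNReal
open SimpleGraph

/-- Iterated triangle function: `PhiStar Φ x [y₁,...,yₖ] = Φ*(x, y₁, ..., yₖ)`. -/
def PhiStar (Φ : ℝ≥0 → ℝ≥0 → ℝ≥0) : ℝ≥0 → List ℝ≥0 → ℝ≥0
  | x, [] => x
  | x, y :: l => Φ x (PhiStar Φ y l)

/-- `Φ`-weight of a (possibly empty) list of weights. -/
def listPhi (Φ : ℝ≥0 → ℝ≥0 → ℝ≥0) : List ℝ≥0 → ℝ≥0
  | [] => 0
  | x :: l => PhiStar Φ x l

/-- `d` is a `Φ`-pseudosemimetric: symmetric, vanishing on the diagonal, and satisfying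
the generalized triangle inequality with triangle function `Φ`. -/
def IsPseudoSemimetricWith {X : Type*} (Φ : ℝ≥0 → ℝ≥0 → ℝ≥0) (d : X → X → ℝ≥0) : Prop :=
  (∀ x y, d x y = d y x) ∧ (∀ x, d x x = 0) ∧ ∀ x y z, d x y ≤ Φ (d x z) (d y z)

/-- Standing conditions on a continuous triangle function `Φ`. -/
def Standing (Φ : ℝ≥0 → ℝ≥0 → ℝ≥0) : Prop :=
  Continuous (fun q : ℝ≥0 × ℝ≥0 => Φ q.1 q.2) ∧
  (∀ x y, Φ x y = Φ y x) ∧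
  (∀ a, Monotone (Φ a)) ∧ (∀ b, Monotone fun a => Φ a b) ∧
  Φ 0 0 = 0 ∧
  (∀ x y z, Φ x (Φ y z) = Φ z (Φ x y)) ∧
  (∀ (a b c : ℝ≥0) (as bs cs : List ℝ≥0),
      (a ::ₘ (as : Multiset ℝ≥0)) ≤ (b ::ₘ (bs : Multiset ℝ≥0)) + (c ::ₘ (cs : Multiset ℝ≥0)) →
      PhiStar Φ a as ≤ Φ (PhiStar Φ b bs) (PhiStar Φ c cs)) ∧
  (∀ a b, max a b ≤ Φ a b)

/-- The shortest-`Φ`-path function `d_Φ^w`. -/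
noncomputable def dPhi {V : Type*} (G : SimpleGraph V) (Φ : ℝ≥0 → ℝ≥0 → ℝ≥0)
    (w : Sym2 V → ℝ≥0) (u v : V) : ℝ≥0 :=
  sInf {x | ∃ p : G.Walk u v, p.IsPath ∧ listPhi Φ (p.edges.map w) = x}

section Aux

variable {Φ : ℝ≥0 → ℝ≥0 → ℝ≥0}

lemma phi_assoc (hcomm : ∀ x y, Φ x y = Φ y x)
    (hid : ∀ x y z, Φ x (Φ y z) = Φ z (Φ x y)) :
    ∀ x y z, Φ (Φ x y) z = Φ x (Φ y z) := by
  intro x y z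
  rw [hid x y z, hcomm]

lemma foldl_key (hcomm : ∀ x y, Φ x y = Φ y x)
    (hid : ∀ x y z, Φ x (Φ y z) = Φ z (Φ x y)) :
    ∀ (l : List ℝ≥0) (x y : ℝ≥0), l.foldl Φ (Φ x y) = Φ x (l.foldl Φ y) := by
  have hassoc := phi_assoc hcomm hid
  intro l
  induction l with
  | nil => intro x y; rfl
  | cons z l ih =>
    intro x y
    simp only [List.foldl_cons]
    rw [hassoc x y z, ih]

lemma phiStar_eq_foldl (hcomm : ∀ x y, Φ x y = Φ y x)
    (hid : ∀ x y z, Φ x (Φ y z) = Φ z (Φ x y)) :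
    ∀ (l : List ℝ≥0) (x : ℝ≥0), PhiStar Φ x l = l.foldl Φ x := by
  intro l
  induction l with
  | nil => intro x; rfl
  | cons y l ih =>
    intro x
    simp only [PhiStar, List.foldl_cons, ih y]
    rw [foldl_key hcomm hid l x y]

/-- Auxiliary fold into `Option ℝ≥0`, with `none` acting as a unit. -/
def gPhi (Φ : ℝ≥0 → ℝ≥0 → ℝ≥0) : Option ℝ≥0 → ℝ≥0 → Option ℝ≥0
  | none, x => some x
  | some a, x => some (Φ a x)

lemma foldl_gPhi_some : ∀ (l : List ℝ≥0) (a : ℝ≥0),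
    l.foldl (gPhi Φ) (some a) = some (l.foldl Φ a) := by
  intro l
  induction l with
  | nil => intro a; rfl
  | cons x l ih => intro a; simp only [List.foldl_cons]; exact ih (Φ a x)

lemma listPhi_eq_foldl_gPhi (hcomm : ∀ x y, Φ x y = Φ y x)
    (hid : ∀ x y z, Φ x (Φ y z) = Φ z (Φ x y)) (l : List ℝ≥0) :
    listPhi Φ l = (l.foldl (gPhi Φ) none).getD 0 := by
  cases l with
  | nil => rfl
  | cons a as =>
    show PhiStar Φ a as = _
    simp only [List.foldl_cons]
    show _ = ((as.foldl (gPhi Φ) (some a)).getD 0)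
    rw [foldl_gPhi_some, phiStar_eq_foldl hcomm hid]
    rfl

lemma listPhi_perm (hcomm : ∀ x y, Φ x y = Φ y x)
    (hid : ∀ x y z, Φ x (Φ y z) = Φ z (Φ x y))
    {l₁ l₂ : List ℝ≥0} (h : l₁.Perm l₂) : listPhi Φ l₁ = listPhi Φ l₂ := by
  have hassoc := phi_assoc hcomm hid
  rw [listPhi_eq_foldl_gPhi hcomm hid, listPhi_eq_foldl_gPhi hcomm hid]
  congr 1
  refine h.foldl_eq' (fun x _ y _ z => ?_) none
  cases z with
  | none => show some (Φ x y) = some (Φ y x); rw [hcomm]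
  | some a =>
    show some (Φ (Φ a x) y) = some (Φ (Φ a y) x)
    rw [hassoc, hassoc, hcomm x y]

end Aux

/-- for a connected weighted graph and a continuous triangle function `Φ`
satisfying the standing conditions, `d_Φ^w` satisfies the generalized triangle
inequality, i.e. it is a `Φ`-pseudosemimetric on `V(G)`. -/
theorem stmt_5 {V : Type*} (G : SimpleGraph V) (hconn : G.Preconnected)
    (w : Sym2 V → ℝ≥0) (Φ : ℝ≥0 → ℝ≥0 → ℝ≥0) (hΦ : Standing Φ) :
    (∀ u v p : V, dPhi G Φ w u v ≤ Φ (dPhi G Φ w u p) (dPhi G Φ w p v)) ∧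
    IsPseudoSemimetricWith Φ (dPhi G Φ w) := by
  classical
  obtain ⟨hcont, hcomm, hmono1, hmono2, h00, hid, hsub, hmax⟩ := hΦ
  have hne : ∀ u v : V,
      {x | ∃ p : G.Walk u v, p.IsPath ∧ listPhi Φ (p.edges.map w) = x}.Nonempty := by
    intro u v
    obtain ⟨p⟩ := hconn u v
    exact ⟨_, p.bypass, p.bypass_isPath, rfl⟩
  have hle : ∀ (u v : V) (p : G.Walk u v), p.IsPath →
      dPhi G Φ w u v ≤ listPhi Φ (p.edges.map w) := by
    intro u v p hp
    exact csInf_le (OrderBot.bddBelow _) ⟨p, hp, rfl⟩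
  have hsymm : ∀ u v, dPhi G Φ w u v = dPhi G Φ w v u := by
    have key : ∀ u v : V,
        {x | ∃ p : G.Walk u v, p.IsPath ∧ listPhi Φ (p.edges.map w) = x} ⊆
        {x | ∃ p : G.Walk v u, p.IsPath ∧ listPhi Φ (p.edges.map w) = x} := by
      rintro u v x ⟨p, hp, rfl⟩
      refine ⟨p.reverse, hp.reverse, ?_⟩
      rw [SimpleGraph.Walk.edges_reverse, List.map_reverse]
      exact listPhi_perm hcomm hid (List.reverse_perm _)
    intro u v
    unfold dPhi
    rw [Set.Subset.antisymm (key u v) (key v u)]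
  have hdiag : ∀ x, dPhi G Φ w x x = 0 := by
    intro x
    refine le_antisymm ?_ zero_le
    simpa [listPhi] using hle x x SimpleGraph.Walk.nil SimpleGraph.Walk.IsPath.nil
  have hcomb : ∀ (l lp lq : List ℝ≥0), (l : Multiset ℝ≥0) ≤ (lp : Multiset ℝ≥0) + lq →
      listPhi Φ l ≤ Φ (listPhi Φ lp) (listPhi Φ lq) := by
    rintro (_ | ⟨a, as⟩) lp lq h
    · exact zero_le
    · match lp, lq with
      | b :: bs, c :: cs => exact hsub a b c as bs cs h
      | [], c :: cs =>
        have h' : (a ::ₘ (as : Multiset ℝ≥0)) ≤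
            ((0 : ℝ≥0) ::ₘ (([] : List ℝ≥0) : Multiset ℝ≥0)) + (c ::ₘ (cs : Multiset ℝ≥0)) := by
          refine h.trans ?_
          refine add_le_add ?_ le_rfl
          exact Multiset.le_cons_self _ _
        exact hsub a 0 c as [] cs h'
      | b :: bs, [] =>
        have h' : (a ::ₘ (as : Multiset ℝ≥0)) ≤
            (b ::ₘ (bs : Multiset ℝ≥0)) + ((0 : ℝ≥0) ::ₘ (([] : List ℝ≥0) : Multiset ℝ≥0)) := by
          refine h.trans ?_
          refine add_le_add le_rfl ?_
          exact Multiset.le_cons_self _ _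
        exact hsub a b 0 as bs [] h'
      | [], [] =>
        exfalso
        have : (a ::ₘ (as : Multiset ℝ≥0)) ≤ 0 := by simp only [Multiset.coe_nil, add_zero] at h; exact h
        simpa using Multiset.le_zero.mp this
  have htri : ∀ u v p, dPhi G Φ w u v ≤ Φ (dPhi G Φ w u p) (dPhi G Φ w p v) := by
    intro u v p
    set A := dPhi G Φ w u p with hA
    set B := dPhi G Φ w p v with hB
    have hstep : ∀ ε : ℝ≥0, 0 < ε → dPhi G Φ w u v ≤ Φ (A + ε) (B + ε) := by
      intro ε hε
      obtain ⟨x, ⟨P, hP, hPx⟩, hxlt⟩ :=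
        exists_lt_of_csInf_lt (hne u p) (lt_add_of_pos_right A hε)
      obtain ⟨y, ⟨Q, hQ, hQy⟩, hylt⟩ :=
        exists_lt_of_csInf_lt (hne p v) (lt_add_of_pos_right B hε)
      have hR : dPhi G Φ w u v ≤ listPhi Φ ((P.append Q).bypass.edges.map w) :=
        hle u v _ (SimpleGraph.Walk.bypass_isPath _)
      have h1 : (((P.append Q).bypass.edges : List (Sym2 V)) : Multiset (Sym2 V)) ≤
          (((P.append Q).edges : List (Sym2 V)) : Multiset (Sym2 V)) :=
        Multiset.coe_le.mpr (((SimpleGraph.Walk.bypass_isPath _).edges_nodup).subperm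
          (SimpleGraph.Walk.edges_bypass_subset _))
      have hsubm : (((P.append Q).bypass.edges.map w : List ℝ≥0) : Multiset ℝ≥0) ≤
          ((P.edges.map w : List ℝ≥0) : Multiset ℝ≥0) + ((Q.edges.map w : List ℝ≥0) : Multiset ℝ≥0) := by
        have h2 := Multiset.map_le_map (f := w) h1
        simpa [Multiset.map_coe, SimpleGraph.Walk.edges_append, List.map_append] using h2
      refine hR.trans ((hcomb _ _ _ hsubm).trans ?_)
      calc Φ (listPhi Φ (P.edges.map w)) (listPhi Φ (Q.edges.map w))
          ≤ Φ (A + ε) (listPhi Φ (Q.edges.map w)) :=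
            hmono2 _ (le_of_lt (hPx ▸ hxlt))
        _ ≤ Φ (A + ε) (B + ε) := hmono1 _ (le_of_lt (hQy ▸ hylt))
    have hcont' : Continuous fun ε : ℝ≥0 => Φ (A + ε) (B + ε) :=
      hcont.comp ((continuous_const.add continuous_id).prodMk
        (continuous_const.add continuous_id))
    have htend : Filter.Tendsto (fun ε : ℝ≥0 => Φ (A + ε) (B + ε))
        (nhdsWithin 0 (Set.Ioi 0)) (nhds (Φ A B)) := by
      have h0 := hcont'.tendsto 0
      simpa using h0.mono_left nhdsWithin_le_nhds
    exact ge_of_tendsto htend (eventually_nhdsWithin_of_forall fun ε hε => hstep ε hε)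
  refine ⟨htri, hsymm, hdiag, fun x y z => ?_⟩
  have := htri x y z
  rwa [hsymm z y] at this
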